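/- Let L > 0, let v : ℝ^N → ℝ^N be Lipschitz with constant L, and let γ : ℝ → ℝ^N be a differentiable curve satisfying γ'(t) = v(γ(t)) for all t. If γ is periodic with period T > 0 (i.e., γ(t + T) = γ(t) for all t) and γ is not constant, then T ≥ 2π/L. -/

import Mathlib

open Real Set Filter Topology
open scoped RealInnerProductSpace

section Helpers

variable {E : Type*} [NormedAddCommGroup E] [InnerProductSpace ℝ E]

lemma gronwall_fwd {L : ℝ} {y y' : ℝ → E}
    (hy : ∀ t, HasDerivAt y (y' t) t) (hb : ∀ t, ‖y' t‖ ≤ L * ‖y t‖)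
    {a : ℝ} (h0 : y a = 0) {t : ℝ} (ht : a ≤ t) : y t = 0 := by
  have key := norm_le_gronwallBound_of_norm_deriv_right_le
    (f := y) (f' := y') (δ := 0) (K := L) (ε := 0) (a := a) (b := t)
    (fun x _ => (hy x).continuousAt.continuousWithinAt)
    (fun x _ => (hy x).hasDerivWithinAt)
    (by simp [h0]) (fun x _ => by simpa using hb x) t ⟨ht, le_rfl⟩
  rw [gronwallBound_ε0] at key
  simpa [norm_le_zero_iff] using key

lemma gronwall_zero {L : ℝ} {y y' : ℝ → E}
    (hy : ∀ t, HasDerivAt y (y' t) t) (hb : ∀ t, ‖y' t‖ ≤ L * ‖y t‖)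
    {a : ℝ} (h0 : y a = 0) (t : ℝ) : y t = 0 := by
  rcases le_total a t with h | h
  · exact gronwall_fwd hy hb h0 h
  · -- reflect
    set z : ℝ → E := fun s => y (2 * a - s) with hz
    have hzd : ∀ s, HasDerivAt z (-y' (2 * a - s)) s := by
      intro s
      have h1 : HasDerivAt (fun s : ℝ => 2 * a - s) (-1) s := by
        simpa using (hasDerivAt_id' s).const_sub (2*a)
      have := (hy (2 * a - s)).scomp s h1
      rw [hz]; simpa [Function.comp_def] using this
    have hzb : ∀ s, ‖-y' (2 * a - s)‖ ≤ L * ‖z s‖ := by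
      intro s; simpa [z] using hb (2 * a - s)
    have hz0 : z a = 0 := by simp only [hz]; rw [show 2*a - a = a by ring]; exact h0
    have := gronwall_fwd hzd hzb hz0 (t := 2 * a - t) (by linarith)
    simpa [z, show 2*a - (2*a - t) = t by ring] using this

lemma norm_hasDerivAt {y : ℝ → E} {y' : E} {t : ℝ}
    (hy : HasDerivAt y y' t) (h : y t ≠ 0) :
    HasDerivAt (fun s => ‖y s‖) (⟪y', y t⟫ / ‖y t‖) t := by
  have hinner : HasDerivAt (fun s => ⟪y s, y s⟫) (2 * ⟪y', y t⟫) t := by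
    have := hy.inner ℝ hy
    simpa [real_inner_comm, two_mul] using this
  have hpos : (0:ℝ) < ⟪y t, y t⟫ := by
    rw [real_inner_self_eq_norm_sq]; exact pow_pos (norm_pos_iff.2 h) 2
  have hsqrt := (Real.hasDerivAt_sqrt hpos.ne').comp t hinner
  have heq : (fun s => Real.sqrt ⟪y s, y s⟫) = fun s => ‖y s‖ := by
    funext s; rw [real_inner_self_eq_norm_sq, Real.sqrt_sq (norm_nonneg _)]
  simp only [Function.comp_def] at hsqrt
  rw [heq] at hsqrt
  refine hsqrt.congr_deriv ?_
  rw [real_inner_self_eq_norm_sq, Real.sqrt_sq (norm_nonneg _)]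
  field_simp

lemma inner_bound {x x' b : E} {L co : ℝ} (hx : x ≠ 0)
    (hxb : ⟪x, b⟫ = ‖x‖ * ‖b‖ * co) (hL : ‖x'‖ ≤ L * ‖x‖) :
    -(L * ‖x‖ * (‖b‖ * Real.sqrt (1 - co ^ 2)))
      ≤ ⟪x', b⟫ - ⟪x', x⟫ / ‖x‖ * (‖b‖ * co) := by
  have hxn : (0:ℝ) < ‖x‖ := norm_pos_iff.2 hx
  set w : E := b - ((co * ‖b‖) / ‖x‖) • x with hw
  have h1 : ⟪x', w⟫ = ⟪x', b⟫ - ⟪x', x⟫ / ‖x‖ * (‖b‖ * co) := by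
    rw [hw, inner_sub_right, real_inner_smul_right]
    field_simp
  have h2 : ‖w‖ ^ 2 = ‖b‖ ^ 2 * (1 - co ^ 2) := by
    rw [hw, norm_sub_sq_real, real_inner_smul_right, real_inner_comm, hxb, norm_smul,
      Real.norm_eq_abs, mul_pow, sq_abs]
    field_simp
    ring
  have h3 : ‖w‖ ≤ ‖b‖ * Real.sqrt (1 - co ^ 2) := by
    have : ‖w‖ = Real.sqrt (‖b‖ ^ 2 * (1 - co ^ 2)) := by
      rw [← h2, Real.sqrt_sq (norm_nonneg _)]
    rw [this, Real.sqrt_mul (sq_nonneg _), Real.sqrt_sq (norm_nonneg _)]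
  have h4 : |⟪x', w⟫| ≤ ‖x'‖ * ‖w‖ := abs_real_inner_le_norm _ _
  have hLx : (0:ℝ) ≤ L * ‖x‖ := le_trans (norm_nonneg _) hL
  have h5 : ‖x'‖ * ‖w‖ ≤ L * ‖x‖ * (‖b‖ * Real.sqrt (1 - co ^ 2)) :=
    mul_le_mul hL h3 (norm_nonneg _) hLx
  rw [← h1]
  have := neg_abs_le ⟪x', w⟫
  linarith

lemma deriv_nonpos_left {f : ℝ → ℝ} {f' τ t₀ : ℝ} (hd : HasDerivAt f f' τ)
    (ht : t₀ < τ) (hpos : ∀ t, t₀ ≤ t → t < τ → 0 < f t) (h0 : f τ = 0) :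
    f' ≤ 0 := by
  have hs : Tendsto (slope f τ) (𝓝[<] τ) (𝓝 f') :=
    (hasDerivAt_iff_tendsto_slope.1 hd).mono_left
      (nhdsWithin_mono _ (fun x hx => ne_of_lt hx))
  have hev : ∀ᶠ t in 𝓝[<] τ, slope f τ t ≤ 0 := by
    filter_upwards [Ioo_mem_nhdsLT ht] with t htm
    rw [slope_def_field]
    have h1 : 0 < f t := hpos t htm.1.le htm.2
    have h2 : t - τ < 0 := by linarith [htm.2]
    rw [h0, sub_zero]
    exact div_nonpos_of_nonneg_of_nonpos h1.le h2.le
  exact le_of_tendsto hs hev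

set_option maxHeartbeats 1000000 in
lemma yorke_key {L : ℝ} (hL : 0 < L) {y y' : ℝ → E}
    (hy : ∀ t, HasDerivAt y (y' t) t) (hb : ∀ t, ‖y' t‖ ≤ L * ‖y t‖)
    (hne : ∀ t, y t ≠ 0) {t₀ P : ℝ} (hP : 0 < P)
    (hanti : y (t₀ + P) = -(y t₀)) : π ≤ L * P := by
  by_contra hc
  push_neg at hc
  have hLP : L < π / P := (lt_div_iff₀ hP).2 hc
  set L' : ℝ := (L + π / P) / 2 with hL'def
  have hπP : (π / P) * P = π := div_mul_cancel₀ _ hP.ne'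
  have hL'1 : L < L' := by rw [hL'def]; linarith
  have hL'P : L' * P < π := by rw [hL'def]; nlinarith
  have hL'pos : 0 < L' := hL.trans hL'1
  have hLPpos : 0 < L' * P := mul_pos hL'pos hP
  set δ : ℝ := (π - L' * P) / 2 with hδdef
  have hδpos : 0 < δ := by rw [hδdef]; linarith
  have hsum : L' * P + δ < π := by rw [hδdef]; linarith
  set b : E := y t₀ with hbdef
  set rb : ℝ := ‖y t₀‖ with hrbdef
  have hrb : 0 < rb := norm_pos_iff.2 (hne t₀)
  have hbnorm : ‖b‖ = rb := rfl
  have hbb : ⟪b, b⟫ = rb ^ 2 := by rw [real_inner_self_eq_norm_sq, hbnorm]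
  have hρpos : ∀ t, (0:ℝ) < ‖y t‖ := fun t => norm_pos_iff.2 (hne t)
  set α : ℝ → ℝ := fun t => L' * (t - t₀) + δ with hαdef
  set φ : ℝ → ℝ := fun t => ⟪y t, b⟫ - ‖y t‖ * (rb * Real.cos (α t)) with hφdef
  have hφd : ∀ t, HasDerivAt φ
      (⟪y' t, b⟫ - (⟪y' t, y t⟫ / ‖y t‖ * (rb * Real.cos (α t))
        + ‖y t‖ * (rb * (-Real.sin (α t) * L')))) t := by
    intro t
    have hA : HasDerivAt (fun s => ⟪y s, b⟫) ⟪y' t, b⟫ t := by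
      simpa using (hy t).inner ℝ (hasDerivAt_const t b)
    have hα : HasDerivAt α L' t := by
      have := (((hasDerivAt_id t).sub_const t₀).const_mul L').add_const δ
      simpa [hαdef] using this
    have hcos : HasDerivAt (fun s => Real.cos (α s)) (-Real.sin (α t) * L') t :=
      (Real.hasDerivAt_cos (α t)).comp t hα
    have hρ : HasDerivAt (fun s => ‖y s‖) (⟪y' t, y t⟫ / ‖y t‖) t :=
      norm_hasDerivAt (hy t) (hne t)
    have := hA.sub (hρ.mul (hcos.const_mul rb))
    exact this
  have hφcont : Continuous φ :=
    continuous_iff_continuousAt.2 fun t => (hφd t).continuousAt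
  have hφt₀ : 0 < φ t₀ := by
    have hαt₀ : α t₀ = δ := by simp [hαdef]
    have hcosδ : Real.cos δ < 1 := by
      have h1 : Real.cos δ < Real.cos 0 :=
        Real.cos_lt_cos_of_nonneg_of_le_pi (le_refl 0) (by linarith) hδpos
      simpa using h1
    have heq : φ t₀ = rb ^ 2 * (1 - Real.cos δ) := by
      simp only [hφdef]
      rw [hαt₀, ← hbdef, hbb, hbnorm]
      try ring
    rw [heq]
    have : (0:ℝ) < rb ^ 2 := pow_pos hrb 2
    nlinarith
  have hφP : φ (t₀ + P) < 0 := by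
    have hα1 : α (t₀ + P) = L' * P + δ := by simp only [hαdef]; ring
    have hcos1 : (-1:ℝ) < Real.cos (L' * P + δ) := by
      have := Real.cos_lt_cos_of_nonneg_of_le_pi (by positivity) le_rfl hsum
      rwa [Real.cos_pi] at this
    have heq : φ (t₀ + P) = -(rb ^ 2) * (1 + Real.cos (L' * P + δ)) := by
      simp only [hφdef]
      rw [hα1, hanti, inner_neg_left, hbb, norm_neg, hbnorm]
      ring
    rw [heq]
    have : (0:ℝ) < rb ^ 2 := pow_pos hrb 2
    nlinarith
  -- first touching point
  set S : Set ℝ := {t | t ∈ Icc t₀ (t₀ + P) ∧ φ t ≤ 0} with hSdef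
  have hSne : (t₀ + P) ∈ S := ⟨⟨by linarith, le_rfl⟩, hφP.le⟩
  have hSbdd : BddBelow S := ⟨t₀, fun t ht => ht.1.1⟩
  have hSclosed : IsClosed S := by
    have : S = Icc t₀ (t₀ + P) ∩ φ ⁻¹' (Iic 0) := by
      ext t
      simp only [hSdef, Set.mem_setOf_eq, Set.mem_inter_iff, Set.mem_preimage,
        Set.mem_Iic]
    rw [this]
    exact isClosed_Icc.inter (isClosed_Iic.preimage hφcont)
  set τ : ℝ := sInf S with hτdef
  have hτS : τ ∈ S := hSclosed.csInf_mem ⟨_, hSne⟩ hSbdd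
  have hτmem : τ ∈ Icc t₀ (t₀ + P) := hτS.1
  have hpos : ∀ t, t₀ ≤ t → t < τ → 0 < φ t := by
    intro t ht1 ht2
    by_contra hcon
    push_neg at hcon
    have htS : t ∈ S := ⟨⟨ht1, by linarith [hτmem.2]⟩, hcon⟩
    have := csInf_le hSbdd htS
    rw [← hτdef] at this
    linarith
  have hτgt : t₀ < τ := by
    rcases lt_or_eq_of_le hτmem.1 with h | h
    · exact h
    · exfalso; rw [← h] at hτS; linarith [hτS.2]
  have hφτ : φ τ = 0 := by
    have hle : φ τ ≤ 0 := hτS.2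
    have hge : 0 ≤ φ τ := by
      have hcont : Tendsto φ (𝓝[<] τ) (𝓝 (φ τ)) :=
        (hφcont.tendsto τ).mono_left nhdsWithin_le_nhds
      refine ge_of_tendsto hcont ?_
      filter_upwards [Ioo_mem_nhdsLT hτgt] with t htm
      exact (hpos t htm.1.le htm.2).le
    linarith
  -- angle at τ is in (0, π)
  have hατ1 : δ ≤ α τ := by
    have h1 : 0 ≤ τ - t₀ := by linarith [hτmem.1]
    have h2 : 0 ≤ L' * (τ - t₀) := mul_nonneg hL'pos.le h1
    simp only [hαdef]; linarith
  have hατ2 : α τ ≤ L' * P + δ := by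
    have h1 : τ - t₀ ≤ P := by linarith [hτmem.2]
    have h2 : L' * (τ - t₀) ≤ L' * P := mul_le_mul_of_nonneg_left h1 hL'pos.le
    simp only [hαdef]; linarith
  have hsin : 0 < Real.sin (α τ) :=
    Real.sin_pos_of_pos_of_lt_pi (by linarith) (by linarith)
  have hρτ : 0 < ‖y τ‖ := hρpos τ
  -- the derivative at τ is nonpositive
  have hdle := deriv_nonpos_left (hφd τ) hτgt hpos hφτ
  -- lower bound from the Lipschitz estimate
  have hxb : ⟪y τ, b⟫ = ‖y τ‖ * ‖b‖ * Real.cos (α τ) := by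
    have h := hφτ
    simp only [hφdef] at h
    rw [hbnorm]
    linarith
  have hib := inner_bound (hne τ) hxb (hb τ)
  have hsqrt : Real.sqrt (1 - Real.cos (α τ) ^ 2) = Real.sin (α τ) := by
    rw [show 1 - Real.cos (α τ) ^ 2 = Real.sin (α τ) ^ 2 by
      nlinarith [Real.sin_sq_add_cos_sq (α τ)]]
    exact Real.sqrt_sq hsin.le
  rw [hsqrt, hbnorm] at hib
  -- combine
  have hu : (0:ℝ) < ‖y τ‖ * rb * Real.sin (α τ) :=
    mul_pos (mul_pos hρτ hrb) hsin
  have e1 : ‖y τ‖ * (rb * (-Real.sin (α τ) * L'))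
      = -(L' * (‖y τ‖ * rb * Real.sin (α τ))) := by ring
  rw [e1] at hdle
  have e2 : L * ‖y τ‖ * (rb * Real.sin (α τ)) = L * (‖y τ‖ * rb * Real.sin (α τ)) := by
    ring
  rw [e2] at hib
  have hfin : L' * (‖y τ‖ * rb * Real.sin (α τ)) ≤ L * (‖y τ‖ * rb * Real.sin (α τ)) := by
    linarith
  have := mul_lt_mul_of_pos_right hL'1 hu
  linarith

end Helpers

/-- **Yorke's period bound.**  A nonconstant periodic orbit of a vector field
that is Lipschitz with constant `L` has period at least `2π/L`. -/
theorem yorke_period_bound {N : ℕ} (L : ℝ) (hL : 0 < L)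
    (v : EuclideanSpace ℝ (Fin N) → EuclideanSpace ℝ (Fin N))
    (hv : ∀ x y, ‖v x - v y‖ ≤ L * ‖x - y‖)
    (γ : ℝ → EuclideanSpace ℝ (Fin N))
    (hγ : ∀ t, HasDerivAt γ (v (γ t)) t)
    (T : ℝ) (hT : 0 < T)
    (hper : ∀ t, γ (t + T) = γ t)
    (hnonconst : ¬ (∀ s t, γ s = γ t)) :
    2 * Real.pi / L ≤ T := by
  by_contra hcon
  push_neg at hcon
  have hπ := Real.pi_pos
  have hLT : L * T < 2 * π := by
    rw [lt_div_iff₀ hL] at hcon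
    linarith
  -- every `T / 2 ^ n` is a period of `γ`
  have hper2 : ∀ n : ℕ, ∀ t, γ (t + T / 2 ^ n) = γ t := by
    intro n
    induction n with
    | zero => simpa using hper
    | succ n ih =>
      set P : ℝ := T / 2 ^ (n + 1) with hPdef
      have hPpos : 0 < P := by rw [hPdef]; positivity
      have h2P : ∀ t, γ (t + 2 * P) = γ t := by
        intro t
        have h : 2 * P = T / 2 ^ n := by
          rw [hPdef, pow_succ]; field_simp
        rw [h]; exact ih t
      set y : ℝ → EuclideanSpace ℝ (Fin N) := fun t => γ (t + P) - γ t with hydef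
      set y' : ℝ → EuclideanSpace ℝ (Fin N) := fun t => v (γ (t + P)) - v (γ t) with hy'def
      have hyd : ∀ t, HasDerivAt y (y' t) t := by
        intro t
        have h1 : HasDerivAt (fun s => γ (s + P)) (v (γ (t + P))) t := by
          have := (hγ (t + P)).scomp t ((hasDerivAt_id t).add_const P)
          simpa [Function.comp_def] using this
        exact h1.sub (hγ t)
      have hyb : ∀ t, ‖y' t‖ ≤ L * ‖y t‖ := fun t => hv _ _
      have hanti : ∀ t, y (t + P) = -(y t) := by
        intro t
        simp only [hydef]
        rw [show t + P + P = t + 2 * P by ring, h2P t]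
        exact (neg_sub _ _).symm
      by_cases hz : ∀ s, y s = 0
      · intro t
        have h := hz t
        simp only [hydef] at h
        rw [sub_eq_zero] at h
        exact h
      · exfalso
        push_neg at hz
        obtain ⟨t₁, ht₁⟩ := hz
        have hne : ∀ t, y t ≠ 0 := by
          intro t h0
          exact ht₁ (gronwall_zero hyd hyb h0 t₁)
        have hkey : π ≤ L * P := by
          have := yorke_key hL hyd hyb hne (t₀ := 0) hPpos
          apply this
          simpa using hanti 0
        have h2n : (1:ℝ) ≤ 2 ^ n := one_le_pow₀ (by norm_num)
        have hP2 : P ≤ T / 2 := by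
          rw [hPdef, pow_succ]
          rw [div_le_div_iff₀ (by positivity) (by norm_num)]
          nlinarith
        have h3 : L * P ≤ L * (T / 2) := mul_le_mul_of_nonneg_left hP2 hL.le
        have h4 : L * (T / 2) < π := by linarith
        linarith
  -- hence `γ` is constant, contradiction
  apply hnonconst
  intro s t
  have hcont : Continuous γ := by
    have h : Differentiable ℝ γ := fun u => (hγ u).differentiableAt
    exact h.continuous
  set u : ℕ → ℝ := fun n => (t - s) - ⌊(t - s) / (T / 2 ^ n)⌋ * (T / 2 ^ n) with hudef
  have hPn : ∀ n : ℕ, (0:ℝ) < T / 2 ^ n := fun n => by positivity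
  have hu0 : ∀ n, 0 ≤ u n := fun n => Int.sub_floor_div_mul_nonneg _ (hPn n)
  have hu1 : ∀ n, u n < T / 2 ^ n := fun n => Int.sub_floor_div_mul_lt _ (hPn n)
  have hval : ∀ n, γ (s + u n) = γ t := by
    intro n
    have h : s + u n = t - ⌊(t - s) / (T / 2 ^ n)⌋ * (T / 2 ^ n) := by
      rw [hudef]; ring
    rw [h]
    exact Function.Periodic.sub_int_mul_eq (hper2 n) _
  have h2 : Tendsto (fun n : ℕ => T / 2 ^ n) atTop (𝓝 0) := by
    have h : ∀ n : ℕ, T / 2 ^ n = T * (1/2 : ℝ) ^ n := by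
      intro n; rw [one_div, inv_pow]; ring
    simp only [h]
    simpa using (tendsto_pow_atTop_nhds_zero_of_lt_one (le_of_lt one_half_pos)
      (by norm_num : (1/2:ℝ) < 1)).const_mul T
  have h3 : Tendsto u atTop (𝓝 0) := squeeze_zero hu0 (fun n => (hu1 n).le) h2
  have hlim : Tendsto (fun n => s + u n) atTop (𝓝 s) := by
    have := tendsto_const_nhds.add h3 (f := fun _ : ℕ => s) (x := atTop)
    simpa using this
  have hγlim : Tendsto (fun n => γ (s + u n)) atTop (𝓝 (γ s)) :=
    (hcont.tendsto s).comp hlim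
  have hconst : Tendsto (fun _ : ℕ => γ t) atTop (𝓝 (γ s)) := by
    have heq : (fun n => γ (s + u n)) = fun _ : ℕ => γ t := funext hval
    rwa [heq] at hγlim
  exact tendsto_nhds_unique hconst tendsto_const_nhds
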